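/- If k ⊆ k' ⊆ A where k' is a field and A is a commutative finite k-algebra that is tame over k, then A is tame over k'. -/

import Mathlib

/-- If `k ⊆ k' ⊆ A` with `k'` a field and `A` a commutative finite `k`-algebra that is
tame over `k` (radical of the trace form = nilradical), then `A` is tame over `k'`. -/
theorem tame_over_intermediate_field (k k' A : Type*) [Field k] [Field k'] [CommRing A]
    [Algebra k k'] [Algebra k' A] [Algebra k A] [IsScalarTower k k' A]
    [FiniteDimensional k A]
    (htame : {x : A | ∀ y : A, Algebra.trace k A (x * y) = 0} = (nilradical A : Set A)) :
    {x : A | ∀ y : A, Algebra.trace k' A (x * y) = 0} = (nilradical A : Set A) := by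
  ext x
  simp only [Set.mem_setOf_eq, SetLike.mem_coe]
  constructor
  · intro h
    rcases subsingleton_or_nontrivial A with hA | hA
    · have : x = 0 := Subsingleton.elim _ _
      simp [this]
    · have : FiniteDimensional k' A := Module.Finite.right k k' A
      have : FiniteDimensional k k' := Module.Finite.left k k' A
      have hx : x ∈ {x : A | ∀ y : A, Algebra.trace k A (x * y) = 0} := by
        intro y
        rw [← Algebra.trace_trace (S := k'), h y, map_zero]
      rwa [htame] at hx
  · intro hx y
    have hnil : IsNilpotent (x * y) := Commute.isNilpotent_mul_right (Commute.all x y) (mem_nilradical.mp hx)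
    exact (Algebra.isNilpotent_trace_of_isNilpotent hnil).eq_zero
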